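/- The family of languages generated by nonerasing semi-conditional grammars of degree (1,1) equals the family of random context languages: SC(1,1) = RC. -/

import Mathlib

/-- Symbols: nonterminals `N` plus terminals `T`. -/
abbrev Symb (N T : Type) := N ⊕ T

/-- `alph w` is the set of symbols occurring in the string `w`. -/
def alph {α : Type} (w : List α) : Set α := {a | a ∈ w}

/-- A (nonerasing) random context grammar: finitely many productions
`(A → x, Per, For)` with `A ∈ N`, `x ∈ (N ∪ T)⁺`, `Per, For ⊆ N`. -/
structure RCG (N T : Type) where
  rules : Set (N × List (Symb N T) × Set N × Set N)
  fin : rules.Finite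
  ne : ∀ r ∈ rules, r.2.1 ≠ []
  start : N

/-- One derivation step of a random context grammar.  The flag `incl` tells whether
the rewritten symbol is included in the context check (`true`: conditions checked
against `alph (uAv)`; `false`: against `alph (uv)`). -/
def RCG.Step {N T : Type} (G : RCG N T) (incl : Bool)
    (s₁ s₂ : List (Symb N T)) : Prop :=
  ∃ A x Per For u v, (A, x, Per, For) ∈ G.rules ∧
    s₁ = u ++ Sum.inl A :: v ∧ s₂ = u ++ x ++ v ∧
    (∀ B ∈ Per, Sum.inl B ∈ alph (if incl then s₁ else u ++ v)) ∧
    (∀ B ∈ For, Sum.inl B ∉ alph (if incl then s₁ else u ++ v))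

/-- The language of a random context grammar (under the chosen derivation definition). -/
def RCG.Lang {N T : Type} (G : RCG N T) (incl : Bool) : Set (List T) :=
  {w | Relation.ReflTransGen (G.Step incl) [Sum.inl G.start] (w.map Sum.inr)}

/-- The family of random context languages over terminal alphabet `T`
(standard definition: rewritten symbol excluded from the context check). -/
def RC (T : Type) : Set (Set (List T)) :=
  {L | ∃ (N : Type) (G : RCG N T), G.Lang false = L}

/-- A (nonerasing) semi-conditional grammar of degree (1,1): productions
`(A → x, Per, For)` with `Per, For ⊆ N ∪ T` of cardinality at most one. -/
structure SCG (N T : Type) where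
  rules : Set (N × List (Symb N T) × Set (Symb N T) × Set (Symb N T))
  fin : rules.Finite
  ne : ∀ r ∈ rules, r.2.1 ≠ []
  per1 : ∀ r ∈ rules, r.2.2.1.Subsingleton
  for1 : ∀ r ∈ rules, r.2.2.2.Subsingleton
  start : N

/-- One derivation step of a semi-conditional grammar; `incl` as in `RCG.Step`. -/
def SCG.Step {N T : Type} (G : SCG N T) (incl : Bool)
    (s₁ s₂ : List (Symb N T)) : Prop :=
  ∃ A x Per For u v, (A, x, Per, For) ∈ G.rules ∧
    s₁ = u ++ Sum.inl A :: v ∧ s₂ = u ++ x ++ v ∧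
    Per ⊆ alph (if incl then s₁ else u ++ v) ∧
    (∀ a ∈ For, a ∉ alph (if incl then s₁ else u ++ v))

/-- The language of a semi-conditional grammar. -/
def SCG.Lang {N T : Type} (G : SCG N T) (incl : Bool) : Set (List T) :=
  {w | Relation.ReflTransGen (G.Step incl) [Sum.inl G.start] (w.map Sum.inr)}

/-- The family SC(1,1): inclusive derivation definition (context `alph (uAv)`). -/
def SC11 (T : Type) : Set (Set (List T)) :=
  {L | ∃ (N : Type) (G : SCG N T), G.Lang true = L}

/-- The family SC'(1,1): exclusive derivation definition (context `alph (uv)`). -/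
def SC11' (T : Type) : Set (Set (List T)) :=
  {L | ∃ (N : Type) (G : SCG N T), G.Lang false = L}


/- ======================== common helpers ======================== -/

@[simp] lemma mem_alph {α : Type} {w : List α} {a : α} : a ∈ alph w ↔ a ∈ w := Iff.rfl

/- ======================== Part A : SC11 ⊆ RC ======================== -/

namespace PartA

variable {N T : Type}

/-- collapse function -/
def f : Symb (Symb N T) T → Symb N T
  | Sum.inl c => c
  | Sum.inr a => Sum.inr a

def rhsTerms (G : SCG N T) : Set T := {a | ∃ r ∈ G.rules, Sum.inr a ∈ r.2.1}

lemma rhsTerms_finite (G : SCG N T) : (rhsTerms G).Finite := by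
  have h : rhsTerms G = Sum.inr ⁻¹' (⋃ r ∈ G.rules, {c | c ∈ r.2.1}) := by
    ext a; simp [rhsTerms]
  rw [h]
  exact (G.fin.biUnion (fun r _ => r.2.1.finite_toSet)).preimage Sum.inr_injective.injOn

/-- the simulating RCG -/
noncomputable def mkRCG (G : SCG N T) : RCG (Symb N T) T where
  rules :=
    (fun r : N × List (Symb N T) × Set (Symb N T) × Set (Symb N T) =>
      ((Sum.inl r.1 : Symb N T), r.2.1.map Sum.inl, r.2.2.1 \ {Sum.inl r.1}, r.2.2.2))
      '' {r ∈ G.rules | Sum.inl r.1 ∉ r.2.2.2}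
    ∪ (fun a : T => ((Sum.inr a : Symb N T), ([Sum.inr a] : List (Symb (Symb N T) T)),
        (∅ : Set (Symb N T)), Set.range (Sum.inl : N → Symb N T))) '' rhsTerms G
  fin := ((G.fin.subset (Set.sep_subset _ _)).image _).union ((rhsTerms_finite G).image _)
  ne := by
    rintro r (⟨r₀, hr₀, rfl⟩ | ⟨a, ha, rfl⟩)
    · simpa using G.ne r₀ hr₀.1
    · simp
  start := Sum.inl G.start

end PartA

namespace PartA

variable {N T : Type}

lemma stepA (G : SCG N T) {s₁ s₂ : List (Symb N T)} (h : G.Step true s₁ s₂) :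
    (mkRCG G).Step false (s₁.map Sum.inl) (s₂.map Sum.inl) := by
  obtain ⟨A, x, Per, For, u, v, hr, h1, h2, hp, hf⟩ := h
  simp only [eq_self_iff_true, if_true] at hp hf
  have hAnotFor : (Sum.inl A : Symb N T) ∉ For := by
    intro hmem
    exact hf _ hmem (by simp [h1, alph])
  refine ⟨Sum.inl A, x.map Sum.inl, Per \ {Sum.inl A}, For, u.map Sum.inl, v.map Sum.inl,
    Or.inl ⟨(A, x, Per, For), ⟨hr, hAnotFor⟩, rfl⟩, by simp [h1], by simp [h2], ?_, ?_⟩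
  · rintro B ⟨hB, hBne⟩
    have h3 : B ∈ alph s₁ := hp hB
    rw [h1] at h3
    simp only [mem_alph, List.mem_append, List.mem_cons] at h3
    rw [if_neg Bool.false_ne_true]
    simp only [mem_alph, List.mem_append, List.mem_map]
    rcases h3 with h'' | h'' | h''
    · exact Or.inl ⟨B, h'', rfl⟩
    · exact absurd h'' (by simpa using hBne)
    · exact Or.inr ⟨B, h'', rfl⟩
  · intro B hB hmem
    rw [if_neg Bool.false_ne_true] at hmem
    simp only [mem_alph, List.mem_append, List.mem_map] at hmem
    apply hf B hB
    rw [h1]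
    simp only [mem_alph, List.mem_append, List.mem_cons]
    rcases hmem with ⟨c, hc, hceq⟩ | ⟨c, hc, hceq⟩
    · obtain rfl := Sum.inl_injective hceq; exact Or.inl hc
    · obtain rfl := Sum.inl_injective hceq; exact Or.inr (Or.inr hc)

lemma terms_reach (G : SCG N T) {s : List (Symb N T)}
    (h : Relation.ReflTransGen (G.Step true) [Sum.inl G.start] s) :
    ∀ a : T, Sum.inr a ∈ s → a ∈ rhsTerms G := by
  induction h with
  | refl => intro a ha; simp at ha
  | tail _ hstep ih =>
    obtain ⟨A, x, Per, For, u, v, hr, h1, h2, _, _⟩ := hstep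
    intro a ha
    rw [h2] at ha
    rcases List.mem_append.1 ha with h' | h'
    · rcases List.mem_append.1 h' with h'' | h''
      · exact ih a (by rw [h1]; exact List.mem_append.2 (Or.inl h''))
      · exact ⟨(A, x, Per, For), hr, h''⟩
    · exact ih a (by rw [h1]; exact List.mem_append.2 (Or.inr (List.mem_cons_of_mem _ h')))

lemma convert (G : SCG N T) (w₂ : List T) : ∀ w₁ : List T, (∀ a ∈ w₂, a ∈ rhsTerms G) →
    Relation.ReflTransGen ((mkRCG G).Step false)
      (w₁.map Sum.inr ++ w₂.map (fun a => Sum.inl (Sum.inr a)))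
      ((w₁ ++ w₂).map Sum.inr) := by
  induction w₂ with
  | nil => intro w₁ _; simpa using Relation.ReflTransGen.refl
  | cons a w₂ ih =>
    intro w₁ hmem
    have step : (mkRCG G).Step false
        (w₁.map Sum.inr ++ (a :: w₂).map (fun a => Sum.inl (Sum.inr a)))
        ((w₁ ++ [a]).map Sum.inr ++ w₂.map (fun a => Sum.inl (Sum.inr a))) := by
      refine ⟨Sum.inr a, [Sum.inr a], ∅, Set.range Sum.inl, w₁.map Sum.inr,
        w₂.map (fun a => Sum.inl (Sum.inr a)),
        Or.inr ⟨a, hmem a (by simp), rfl⟩, by simp, by simp, by simp, ?_⟩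
      rintro B ⟨A₀, rfl⟩ hmem'
      rw [if_neg Bool.false_ne_true] at hmem'
      simp only [mem_alph, List.mem_append, List.mem_map] at hmem'
      rcases hmem' with ⟨c, _, hceq⟩ | ⟨c, _, hceq⟩
      · exact absurd hceq (by simp)
      · exact absurd hceq (by simp)
    have h2 := ih (w₁ ++ [a]) (fun b hb => hmem b (by simp [hb]))
    simpa using Relation.ReflTransGen.head step (by simpa using h2)

end PartA

namespace PartA

variable {N T : Type}

@[simp] lemma f_inl (c : Symb N T) : f (Sum.inl c : Symb (Symb N T) T) = c := rfl
@[simp] lemma f_inr (a : T) : f (Sum.inr a : Symb (Symb N T) T) = Sum.inr a := rfl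

def Inv (G : SCG N T) (s' : List (Symb (Symb N T) T)) : Prop :=
  Relation.ReflTransGen (G.Step true) [Sum.inl G.start] (s'.map f) ∧
  ((∃ a : T, Sum.inr a ∈ s') → ∀ A : N, Sum.inl (Sum.inl A) ∉ s')

lemma inv_init (G : SCG N T) : Inv G [Sum.inl (Sum.inl G.start)] := by
  constructor
  · simpa using Relation.ReflTransGen.refl
  · rintro ⟨a, ha⟩; simp at ha

lemma inv_step (G : SCG N T) {s₁ s₂ : List (Symb (Symb N T) T)}
    (hinv : Inv G s₁) (hstep : (mkRCG G).Step false s₁ s₂) : Inv G s₂ := by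
  obtain ⟨hreach, hpure⟩ := hinv
  obtain ⟨A', x', Per', For', u, v, hr, h1, h2, hp, hf⟩ := hstep
  rw [if_neg Bool.false_ne_true] at hp hf
  rcases hr with ⟨⟨A, x, Per, For⟩, ⟨hrG, hAnotFor⟩, heq⟩ | ⟨a, ha, heq⟩
  · -- core rule
    simp only [Prod.mk.injEq] at heq
    obtain ⟨hA', hx', hPer', hFor'⟩ := heq
    subst hA' hx' hPer' hFor'
    simp only at hrG hAnotFor
    have hnoinr : ∀ a : T, Sum.inr a ∉ s₁ := by
      intro a hmem
      exact hpure ⟨a, hmem⟩ A (by rw [h1]; simp)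
    have hnoinr_u : ∀ a : T, Sum.inr a ∉ u := fun a hm =>
      hnoinr a (by rw [h1]; exact List.mem_append.2 (Or.inl hm))
    have hnoinr_v : ∀ a : T, Sum.inr a ∉ v := fun a hm =>
      hnoinr a (by rw [h1]; exact List.mem_append.2 (Or.inr (List.mem_cons_of_mem _ hm)))
    have hmapf : s₁.map f = u.map f ++ Sum.inl A :: v.map f := by
      rw [h1]; simp
    have hstepG : G.Step true (s₁.map f) (u.map f ++ x ++ v.map f) := by
      refine ⟨A, x, Per, For, u.map f, v.map f, hrG, hmapf, rfl, ?_, ?_⟩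
      · intro B hB
        rw [if_pos rfl, hmapf]
        simp only [mem_alph, List.mem_append, List.mem_cons]
        by_cases hBA : B = Sum.inl A
        · exact Or.inr (Or.inl hBA)
        · have h3 := hp B ⟨hB, by simpa using hBA⟩
          simp only [mem_alph, List.mem_append] at h3
          rcases h3 with h' | h'
          · exact Or.inl (List.mem_map_of_mem (f := f) h')
          · exact Or.inr (Or.inr (List.mem_map_of_mem (f := f) h'))
      · intro B hB hmem
        rw [if_pos rfl, hmapf] at hmem
        simp only [mem_alph, List.mem_append, List.mem_cons, List.mem_map] at hmem
        rcases hmem with ⟨c, hc, hceq⟩ | hBA | ⟨c, hc, hceq⟩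
        · rcases c with c' | a
          · rw [f_inl] at hceq; subst hceq
            exact hf _ hB (List.mem_append.2 (Or.inl hc))
          · exact hnoinr_u a hc
        · exact hAnotFor (by rwa [← hBA])
        · rcases c with c' | a
          · rw [f_inl] at hceq; subst hceq
            exact hf _ hB (List.mem_append.2 (Or.inr hc))
          · exact hnoinr_v a hc
    constructor
    · have h4 : s₂.map f = u.map f ++ x ++ v.map f := by
        rw [h2]
        simp only [List.map_append, List.map_map]
        rw [show (f ∘ (Sum.inl : Symb N T → Symb (Symb N T) T)) = id from
          funext fun _ => rfl, List.map_id]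
      rw [h4]
      exact hreach.tail hstepG
    · rintro ⟨a, ha⟩
      exfalso
      rw [h2] at ha
      rcases List.mem_append.1 ha with h' | h'
      · rcases List.mem_append.1 h' with h'' | h''
        · exact hnoinr_u a h''
        · simp at h''
      · exact hnoinr_v a h'
  · -- conversion rule
    simp only [Prod.mk.injEq] at heq
    obtain ⟨hA', hx', hPer', hFor'⟩ := heq
    subst hA' hx' hPer' hFor'
    have hmapf : s₂.map f = s₁.map f := by
      rw [h1, h2]; simp
    constructor
    · rw [hmapf]; exact hreach
    · intro _ A hmem
      have hnolk : ∀ A₀ : N, Sum.inl (Sum.inl A₀) ∉ u ++ v := by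
        intro A₀ hmem₀
        exact hf (Sum.inl A₀) ⟨A₀, rfl⟩ hmem₀
      rw [h2] at hmem
      rcases List.mem_append.1 hmem with h' | h'
      · rcases List.mem_append.1 h' with h'' | h''
        · exact hnolk A (List.mem_append.2 (Or.inl h''))
        · simp at h''
      · exact hnolk A (List.mem_append.2 (Or.inr h'))

lemma inv_reach (G : SCG N T) {s' : List (Symb (Symb N T) T)}
    (h : Relation.ReflTransGen ((mkRCG G).Step false) [Sum.inl (mkRCG G).start] s') :
    Inv G s' := by
  induction h with
  | refl => exact inv_init G
  | tail _ hstep ih => exact inv_step G ih hstep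

lemma langA (G : SCG N T) : (mkRCG G).Lang false = G.Lang true := by
  ext w
  constructor
  · intro hw
    have hinv : Inv G (w.map Sum.inr) := inv_reach G hw
    have : (w.map (Sum.inr : T → Symb (Symb N T) T)).map f = w.map Sum.inr := by
      simp
    rw [SCG.Lang, Set.mem_setOf_eq, ← this]
    exact hinv.1
  · intro hw
    have hlift : Relation.ReflTransGen ((mkRCG G).Step false)
        ([Sum.inl G.start].map (Sum.inl : Symb N T → Symb (Symb N T) T))
        ((w.map Sum.inr).map Sum.inl) :=
      Relation.ReflTransGen.lift (List.map Sum.inl) (fun _ _ h => stepA G h) _ _ hw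
    have hterms : ∀ a ∈ w, a ∈ rhsTerms G := by
      intro a ha
      exact terms_reach G hw a (List.mem_map_of_mem ha)
    have hconv := convert G w [] hterms
    refine Relation.ReflTransGen.trans ?_ (by simpa using hconv)
    simpa [Function.comp_def, mkRCG] using hlift

end PartA

/- ======================== Part B : RC ⊆ SC11 ======================== -/

namespace PartB

variable {N T : Type}

abbrev Rl (N T : Type) := N × List (Symb N T) × Set N × Set N

inductive NB (N T : Type) : Type where
  | old : N → NB N T
  | lkIdle : Symb N T → NB N T
  | lkPre : Rl N T → Symb N T → NB N T
  | lkChk : Rl N T → Bool → Set N → Set N → Symb N T → NB N T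
  | mk : Rl N T → NB N T
  | st : NB N T

def e : Symb N T → Symb (NB N T) T
  | Sum.inl A => Sum.inl (NB.old A)
  | Sum.inr a => Sum.inr a

@[simp] lemma e_inl (A : N) : (e (Sum.inl A) : Symb (NB N T) T) = Sum.inl (NB.old A) := rfl
@[simp] lemma e_inr (a : T) : (e (Sum.inr a) : Symb (NB N T) T) = Sum.inr a := rfl

lemma mem_map_e {l : List (Symb N T)} {c : NB N T} (h : Sum.inl c ∈ l.map e) :
    ∃ A, c = NB.old A ∧ Sum.inl A ∈ l := by
  simp only [List.mem_map] at h
  obtain ⟨d, hd, hde⟩ := h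
  rcases d with A | a
  · exact ⟨A, by simpa using hde.symm, hd⟩
  · simp at hde

@[simp] lemma old_mem_map_e {l : List (Symb N T)} {A : N} :
    Sum.inl (NB.old A) ∈ l.map e ↔ Sum.inl A ∈ l := by
  constructor
  · intro h
    obtain ⟨A', hA', hmem⟩ := mem_map_e h
    cases hA'; exact hmem
  · intro h
    exact List.mem_map.2 ⟨Sum.inl A, h, rfl⟩

@[simp] lemma inr_mem_map_e {l : List (Symb N T)} {a : T} :
    Sum.inr a ∈ l.map e ↔ Sum.inr a ∈ l := by
  constructor
  · intro h
    simp only [List.mem_map] at h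
    obtain ⟨d, hd, hde⟩ := h
    rcases d with A | b
    · simp at hde
    · have : a = b := by simpa using hde.symm
      subst this; exact hd
  · intro h
    exact List.mem_map.2 ⟨Sum.inr a, h, rfl⟩

variable (G : RCG N T)

def Sig : Set (Symb N T) := insert (Sum.inl G.start) (⋃ r ∈ G.rules, {c | c ∈ r.2.1})

def SigN : Set N := {B | Sum.inl B ∈ Sig G}

lemma Sig_finite : (Sig G).Finite :=
  (G.fin.biUnion (fun r _ => r.2.1.finite_toSet)).insert _

lemma SigN_finite : (SigN G).Finite :=
  (Sig_finite G).preimage Sum.inl_injective.injOn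

/-- rules of the simulating SCG -/
inductive BR : NB N T → List (Symb (NB N T) T) → Set (Symb (NB N T) T) →
    Set (Symb (NB N T) T) → Prop
  | start : BR .st [Sum.inl (.lkIdle (Sum.inl G.start))] ∅ ∅
  | engage (ρ : Rl N T) (X : Symb N T) (hρ : ρ ∈ G.rules) (hPer : ρ.2.2.1 ⊆ SigN G)
      (hX : X ∈ Sig G) :
      BR (.lkIdle X) [Sum.inl (.lkPre ρ X)] ∅ ∅
  | mark (ρ : Rl N T) (X : Symb N T) (hρ : ρ ∈ G.rules) (hX : X ∈ Sig G) :
      BR (.old ρ.1) [Sum.inl (.mk ρ)] {Sum.inl (.lkPre ρ X)} {Sum.inl (.mk ρ)}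
  | adv (ρ : Rl N T) (X : Symb N T) (hρ : ρ ∈ G.rules) (hX : X ∈ Sig G) :
      BR (.lkPre ρ X) [Sum.inl (.lkChk ρ false ρ.2.2.1 (ρ.2.2.2 ∩ SigN G) X)]
        {Sum.inl (.mk ρ)} ∅
  | markhat (ρ : Rl N T) (hρ : ρ ∈ G.rules) :
      BR (.lkPre ρ (Sum.inl ρ.1))
        [Sum.inl (.lkChk ρ true ρ.2.2.1 (ρ.2.2.2 ∩ SigN G) (Sum.inl ρ.1))] ∅
        {Sum.inl (.mk ρ)}
  | chkP (ρ : Rl N T) (h : Bool) (P F : Set N) (X : Symb N T) (b : N) (hρ : ρ ∈ G.rules)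
      (hX : X ∈ Sig G) (hP : P ⊆ SigN G) (hF : F ⊆ SigN G) (hb : b ∈ SigN G) :
      BR (.lkChk ρ h P F X) [Sum.inl (.lkChk ρ h (P \ {b}) F X)] {Sum.inl (.old b)} ∅
  | chkPX (ρ : Rl N T) (P F : Set N) (b : N) (hρ : ρ ∈ G.rules) (hb : b ∈ SigN G)
      (hP : P ⊆ SigN G) (hF : F ⊆ SigN G) :
      BR (.lkChk ρ false P F (Sum.inl b)) [Sum.inl (.lkChk ρ false (P \ {b}) F (Sum.inl b))]
        ∅ ∅
  | chkF (ρ : Rl N T) (h : Bool) (P F : Set N) (X : Symb N T) (c : N) (hρ : ρ ∈ G.rules)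
      (hX : X ∈ Sig G) (hP : P ⊆ SigN G) (hF : F ⊆ SigN G) (hc : c ∈ SigN G)
      (hhX : h = true ∨ X ≠ Sum.inl c) :
      BR (.lkChk ρ h P F X) [Sum.inl (.lkChk ρ h P (F \ {c}) X)] ∅ {Sum.inl (.old c)}
  | fin (ρ : Rl N T) (X : Symb N T) (hρ : ρ ∈ G.rules) (hX : X ∈ Sig G) :
      BR (.mk ρ) (ρ.2.1.map e) {Sum.inl (.lkChk ρ false ∅ ∅ X)} ∅
  | unlock (ρ : Rl N T) (X : Symb N T) (hρ : ρ ∈ G.rules) (hX : X ∈ Sig G) :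
      BR (.lkChk ρ false ∅ ∅ X) [Sum.inl (.lkIdle X)] ∅ {Sum.inl (.mk ρ)}
  | finhat (ρ : Rl N T) (x₁ : Symb N T) (xs : List (Symb N T)) (hρ : ρ ∈ G.rules)
      (hx : ρ.2.1 = x₁ :: xs) :
      BR (.lkChk ρ true ∅ ∅ (Sum.inl ρ.1)) (Sum.inl (.lkIdle x₁) :: xs.map e) ∅ ∅
  | finish (a : T) (ha : Sum.inr a ∈ Sig G) :
      BR (.lkIdle (Sum.inr a)) [Sum.inr a] ∅ ∅

end PartB

namespace PartB

variable {N T : Type} (G : RCG N T)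

abbrev RuleT (N T : Type) := (NB N T) × List (Symb (NB N T) T) ×
  Set (Symb (NB N T) T) × Set (Symb (NB N T) T)

def bigBound : Set (RuleT N T) :=
  {(NB.st, [Sum.inl (NB.lkIdle (Sum.inl G.start))], ∅, ∅)}
  ∪ (fun p : Rl N T × Symb N T =>
      ((NB.lkIdle p.2 : NB N T), [Sum.inl (NB.lkPre p.1 p.2)], ∅, ∅)) '' (G.rules ×ˢ Sig G)
  ∪ (fun p : Rl N T × Symb N T =>
      ((NB.old p.1.1 : NB N T), [Sum.inl (NB.mk p.1)], {Sum.inl (NB.lkPre p.1 p.2)},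
        {Sum.inl (NB.mk p.1)})) '' (G.rules ×ˢ Sig G)
  ∪ (fun p : Rl N T × Symb N T =>
      ((NB.lkPre p.1 p.2 : NB N T),
        [Sum.inl (NB.lkChk p.1 false p.1.2.2.1 (p.1.2.2.2 ∩ SigN G) p.2)],
        {Sum.inl (NB.mk p.1)}, ∅)) '' (G.rules ×ˢ Sig G)
  ∪ (fun ρ : Rl N T =>
      ((NB.lkPre ρ (Sum.inl ρ.1) : NB N T),
        [Sum.inl (NB.lkChk ρ true ρ.2.2.1 (ρ.2.2.2 ∩ SigN G) (Sum.inl ρ.1))], ∅,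
        {Sum.inl (NB.mk ρ)})) '' G.rules
  ∪ (fun p : Rl N T × Bool × Set N × Set N × Symb N T × N =>
      ((NB.lkChk p.1 p.2.1 p.2.2.1 p.2.2.2.1 p.2.2.2.2.1 : NB N T),
        [Sum.inl (NB.lkChk p.1 p.2.1 (p.2.2.1 \ {p.2.2.2.2.2}) p.2.2.2.1 p.2.2.2.2.1)],
        {Sum.inl (NB.old p.2.2.2.2.2)}, ∅)) ''
      (G.rules ×ˢ (Set.univ : Set Bool) ×ˢ {P | P ⊆ SigN G} ×ˢ {F | F ⊆ SigN G} ×ˢ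
        Sig G ×ˢ SigN G)
  ∪ (fun p : Rl N T × Set N × Set N × N =>
      ((NB.lkChk p.1 false p.2.1 p.2.2.1 (Sum.inl p.2.2.2) : NB N T),
        [Sum.inl (NB.lkChk p.1 false (p.2.1 \ {p.2.2.2}) p.2.2.1 (Sum.inl p.2.2.2))],
        ∅, ∅)) ''
      (G.rules ×ˢ {P | P ⊆ SigN G} ×ˢ {F | F ⊆ SigN G} ×ˢ SigN G)
  ∪ (fun p : Rl N T × Bool × Set N × Set N × Symb N T × N =>
      ((NB.lkChk p.1 p.2.1 p.2.2.1 p.2.2.2.1 p.2.2.2.2.1 : NB N T),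
        [Sum.inl (NB.lkChk p.1 p.2.1 p.2.2.1 (p.2.2.2.1 \ {p.2.2.2.2.2}) p.2.2.2.2.1)],
        ∅, {Sum.inl (NB.old p.2.2.2.2.2)})) ''
      (G.rules ×ˢ (Set.univ : Set Bool) ×ˢ {P | P ⊆ SigN G} ×ˢ {F | F ⊆ SigN G} ×ˢ
        Sig G ×ˢ SigN G)
  ∪ (fun p : Rl N T × Symb N T =>
      ((NB.mk p.1 : NB N T), p.1.2.1.map e, {Sum.inl (NB.lkChk p.1 false ∅ ∅ p.2)}, ∅))
      '' (G.rules ×ˢ Sig G)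
  ∪ (fun p : Rl N T × Symb N T =>
      ((NB.lkChk p.1 false ∅ ∅ p.2 : NB N T), [Sum.inl (NB.lkIdle p.2)], ∅,
        {Sum.inl (NB.mk p.1)})) '' (G.rules ×ˢ Sig G)
  ∪ (fun ρ : Rl N T =>
      ((NB.lkChk ρ true ∅ ∅ (Sum.inl ρ.1) : NB N T),
        Sum.inl (NB.lkIdle (ρ.2.1.head?.getD (Sum.inl G.start))) :: ρ.2.1.tail.map e, ∅, ∅)) '' G.rules
  ∪ (fun a : T => ((NB.lkIdle (Sum.inr a) : NB N T), [Sum.inr a], ∅, ∅)) ''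
      {a : T | Sum.inr a ∈ Sig G}

lemma bigBound_finite : (bigBound G).Finite := by
  have h1 := G.fin
  have h2 := Sig_finite G
  have h3 := SigN_finite G
  have h4 : ({P : Set N | P ⊆ SigN G}).Finite := h3.finite_subsets
  have h5 : ({a : T | Sum.inr a ∈ Sig G}).Finite :=
    h2.preimage Sum.inr_injective.injOn
  refine (((((((((((Set.finite_singleton _).union ((h1.prod h2).image _)).union
    ((h1.prod h2).image _)).union ((h1.prod h2).image _)).union (h1.image _)).union
    (((h1.prod (Set.finite_univ.prod (h4.prod (h4.prod (h2.prod h3))))).image _))).union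
    ((h1.prod (h4.prod (h4.prod h3))).image _)).union
    (((h1.prod (Set.finite_univ.prod (h4.prod (h4.prod (h2.prod h3))))).image _))).union
    ((h1.prod h2).image _)).union ((h1.prod h2).image _)).union (h1.image _)).union
    (h5.image _)

lemma BR_subset_bigBound :
    {r : RuleT N T | BR G r.1 r.2.1 r.2.2.1 r.2.2.2} ⊆ bigBound G := by
  rintro ⟨A', x', P', F'⟩ hr
  simp only [Set.mem_setOf_eq] at hr
  unfold bigBound
  simp only [Set.mem_union, Set.mem_image, Set.mem_singleton_iff, Set.mem_prod,
    Set.mem_setOf_eq, Set.mem_univ, true_and]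
  cases hr with
  | start => tauto
  | engage ρ X hρ hPer hX =>
      exact Or.inl (Or.inl (Or.inl (Or.inl (Or.inl (Or.inl (Or.inl (Or.inl (Or.inl
        (Or.inl (Or.inr ⟨(ρ, X), ⟨hρ, hX⟩, rfl⟩))))))))))
  | mark ρ X hρ hX =>
      exact Or.inl (Or.inl (Or.inl (Or.inl (Or.inl (Or.inl (Or.inl (Or.inl (Or.inl
        (Or.inr ⟨(ρ, X), ⟨hρ, hX⟩, rfl⟩)))))))))
  | adv ρ X hρ hX =>
      exact Or.inl (Or.inl (Or.inl (Or.inl (Or.inl (Or.inl (Or.inl (Or.inl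
        (Or.inr ⟨(ρ, X), ⟨hρ, hX⟩, rfl⟩))))))))
  | markhat ρ hρ =>
      exact Or.inl (Or.inl (Or.inl (Or.inl (Or.inl (Or.inl (Or.inl
        (Or.inr ⟨ρ, hρ, rfl⟩)))))))
  | chkP ρ h P F X b hρ hX hP hF hb =>
      exact Or.inl (Or.inl (Or.inl (Or.inl (Or.inl (Or.inl
        (Or.inr ⟨(ρ, h, P, F, X, b), ⟨hρ, hP, hF, hX, hb⟩, rfl⟩))))))
  | chkPX ρ P F b hρ hb hP hF =>
      exact Or.inl (Or.inl (Or.inl (Or.inl (Or.inl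
        (Or.inr ⟨(ρ, P, F, b), ⟨hρ, hP, hF, hb⟩, rfl⟩)))))
  | chkF ρ h P F X c hρ hX hP hF hc hhX =>
      exact Or.inl (Or.inl (Or.inl (Or.inl
        (Or.inr ⟨(ρ, h, P, F, X, c), ⟨hρ, hP, hF, hX, hc⟩, rfl⟩))))
  | fin ρ X hρ hX =>
      exact Or.inl (Or.inl (Or.inl (Or.inr ⟨(ρ, X), ⟨hρ, hX⟩, rfl⟩)))
  | unlock ρ X hρ hX =>
      exact Or.inl (Or.inl (Or.inr ⟨(ρ, X), ⟨hρ, hX⟩, rfl⟩))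
  | finhat ρ x₁ xs hρ hx =>
      exact Or.inl (Or.inr ⟨ρ, hρ, by simp [hx]⟩)
  | finish a ha =>
      exact Or.inr ⟨a, ha, rfl⟩

noncomputable def mkSCG : SCG (NB N T) T where
  rules := {r : RuleT N T | BR G r.1 r.2.1 r.2.2.1 r.2.2.2}
  fin := (bigBound_finite G).subset (BR_subset_bigBound G)
  ne := by
    rintro ⟨A', x', P', F'⟩ hr
    simp only [Set.mem_setOf_eq] at hr
    cases hr with
    | fin ρ X hρ hX => simpa using G.ne ρ hρ
    | _ => simp
  per1 := by
    rintro ⟨A', x', P', F'⟩ hr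
    simp only [Set.mem_setOf_eq] at hr
    cases hr <;> first
      | exact Set.subsingleton_empty
      | exact Set.subsingleton_singleton
  for1 := by
    rintro ⟨A', x', P', F'⟩ hr
    simp only [Set.mem_setOf_eq] at hr
    cases hr <;> first
      | exact Set.subsingleton_empty
      | exact Set.subsingleton_singleton
  start := NB.st

end PartB

namespace PartB

variable {N T : Type} (G : RCG N T)

@[simp] lemma lkIdle_not_mem_map_e {X : Symb N T} {l : List (Symb N T)} :
    Sum.inl (NB.lkIdle X) ∉ l.map e := fun h => by
  obtain ⟨A, hA, _⟩ := mem_map_e h; cases hA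

@[simp] lemma lkPre_not_mem_map_e {ρ : Rl N T} {X : Symb N T} {l : List (Symb N T)} :
    Sum.inl (NB.lkPre ρ X) ∉ l.map e := fun h => by
  obtain ⟨A, hA, _⟩ := mem_map_e h; cases hA

@[simp] lemma lkChk_not_mem_map_e {ρ : Rl N T} {h : Bool} {P F : Set N} {X : Symb N T}
    {l : List (Symb N T)} : Sum.inl (NB.lkChk ρ h P F X) ∉ l.map e := fun h => by
  obtain ⟨A, hA, _⟩ := mem_map_e h; cases hA

@[simp] lemma mk_not_mem_map_e {ρ : Rl N T} {l : List (Symb N T)} :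
    Sum.inl (NB.mk ρ) ∉ l.map e := fun h => by
  obtain ⟨A, hA, _⟩ := mem_map_e h; cases hA

@[simp] lemma st_not_mem_map_e {l : List (Symb N T)} :
    Sum.inl (NB.st : NB N T) ∉ l.map e := fun h => by
  obtain ⟨A, hA, _⟩ := mem_map_e h; cases hA

def Reach (s : List (Symb N T)) : Prop :=
  Relation.ReflTransGen (G.Step false) [Sum.inl G.start] s

lemma reach_sub_Sig {s : List (Symb N T)} (h : Reach G s) : ∀ c ∈ s, c ∈ Sig G := by
  induction h with
  | refl => intro c hc; simp only [List.mem_singleton] at hc; subst hc; exact Or.inl rfl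
  | tail _ hstep ih =>
    obtain ⟨A, x, Per, For, u, v, hr, h1, h2, _, _⟩ := hstep
    intro c hc
    rw [h2] at hc
    rcases List.mem_append.1 hc with h' | h'
    · rcases List.mem_append.1 h' with h'' | h''
      · exact ih c (by rw [h1]; exact List.mem_append.2 (Or.inl h''))
      · exact Or.inr (Set.mem_biUnion hr h'')
    · exact ih c (by rw [h1]; exact List.mem_append.2 (Or.inr (List.mem_cons_of_mem _ h')))

lemma reach_ne_nil {s : List (Symb N T)} (h : Reach G s) : s ≠ [] := by
  induction h with
  | refl => simp
  | tail _ hstep _ =>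
    obtain ⟨A, x, Per, For, u, v, hr, h1, h2, _, _⟩ := hstep
    rw [h2]
    have := G.ne _ hr
    rcases x with _ | ⟨y, ys⟩
    · exact absurd rfl this
    · rcases u with _ | ⟨z, zs⟩ <;> simp

/-- make a step of the simulating grammar -/
lemma step_of {A' : NB N T} {x' : List (Symb (NB N T) T)}
    {P' F' : Set (Symb (NB N T) T)} (hr : BR G A' x' P' F')
    (u v : List (Symb (NB N T) T))
    (hP : ∀ p ∈ P', p ∈ alph (u ++ Sum.inl A' :: v))
    (hF : ∀ q ∈ F', q ∉ alph (u ++ Sum.inl A' :: v)) :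
    (mkSCG G).Step true (u ++ Sum.inl A' :: v) (u ++ x' ++ v) := by
  refine ⟨A', x', P', F', u, v, hr, rfl, rfl, ?_, ?_⟩
  · rw [if_pos rfl]; exact fun p hp => hP p hp
  · rw [if_pos rfl]; exact hF

end PartB

namespace PartB

variable {N T : Type} (G : RCG N T)

lemma chainP (ρ : Rl N T) (h : Bool) (X : Symb N T) (F : Set N)
    (hρ : ρ ∈ G.rules) (hX : X ∈ Sig G) (hF : F ⊆ SigN G)
    (l : List (Symb (NB N T) T)) :
    ∀ P : Set N, P.Finite → P ⊆ ρ.2.2.1 → ρ.2.2.1 ⊆ SigN G →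
    (∀ b ∈ P, (h = false ∧ X = Sum.inl b) ∨ Sum.inl (NB.old b) ∈ l) →
    Relation.ReflTransGen ((mkSCG G).Step true)
      (Sum.inl (NB.lkChk ρ h P F X) :: l) (Sum.inl (NB.lkChk ρ h ∅ F X) :: l) := by
  intro P hPfin
  refine Set.Finite.induction_on (motive := fun P _ => P ⊆ ρ.2.2.1 → ρ.2.2.1 ⊆ SigN G →
      (∀ b ∈ P, (h = false ∧ X = Sum.inl b) ∨ Sum.inl (NB.old b) ∈ l) →
      Relation.ReflTransGen ((mkSCG G).Step true)
        (Sum.inl (NB.lkChk ρ h P F X) :: l) (Sum.inl (NB.lkChk ρ h ∅ F X) :: l))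
      _ hPfin (fun _ _ _ => Relation.ReflTransGen.refl) ?_
  intro b P hbP hPfin ih hsub hPerS hpres
  have hb : b ∈ SigN G := hPerS (hsub (Set.mem_insert b P))
  have hstep : (mkSCG G).Step true (Sum.inl (NB.lkChk ρ h (insert b P) F X) :: l)
      (Sum.inl (NB.lkChk ρ h P F X) :: l) := by
    have hPb : insert b P \ {b} = P := by
      simp [Set.insert_diff_of_mem, Set.diff_singleton_eq_self hbP]
    rcases hpres b (Set.mem_insert b P) with ⟨hh, hXb⟩ | hmem
    · subst hh hXb
      have := step_of G (BR.chkPX ρ (insert b P) F b hρ hb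
        (fun y hy => hPerS (hsub hy)) hF) [] l (by simp) (by simp)
      rw [hPb] at this
      simpa using this
    · have := step_of G (BR.chkP ρ h (insert b P) F X b hρ hX
        (fun y hy => hPerS (hsub hy)) hF hb) [] l ?_ (by simp)
      · rw [hPb] at this
        simpa using this
      · intro p hp
        simp only [Set.mem_singleton_iff] at hp
        subst hp
        simp only [mem_alph, List.nil_append, List.mem_cons]
        exact Or.inr hmem
  exact Relation.ReflTransGen.head hstep
    (ih (fun y hy => hsub (Set.mem_insert_of_mem _ hy)) hPerS
      (fun y hy => hpres y (Set.mem_insert_of_mem _ hy)))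

lemma chainF (ρ : Rl N T) (h : Bool) (X : Symb N T)
    (hρ : ρ ∈ G.rules) (hX : X ∈ Sig G)
    (l : List (Symb (NB N T) T)) :
    ∀ F : Set N, F.Finite → F ⊆ SigN G →
    (∀ c ∈ F, (h = true ∨ X ≠ Sum.inl c) ∧ Sum.inl (NB.old c) ∉ l) →
    Relation.ReflTransGen ((mkSCG G).Step true)
      (Sum.inl (NB.lkChk ρ h ∅ F X) :: l) (Sum.inl (NB.lkChk ρ h ∅ ∅ X) :: l) := by
  intro F hFfin
  refine Set.Finite.induction_on (motive := fun F _ => F ⊆ SigN G →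
      (∀ c ∈ F, (h = true ∨ X ≠ Sum.inl c) ∧ Sum.inl (NB.old c) ∉ l) →
      Relation.ReflTransGen ((mkSCG G).Step true)
        (Sum.inl (NB.lkChk ρ h ∅ F X) :: l) (Sum.inl (NB.lkChk ρ h ∅ ∅ X) :: l))
      _ hFfin (fun _ _ => Relation.ReflTransGen.refl) ?_
  intro c F hcF hFfin ih hsub habs
  have hc : c ∈ SigN G := hsub (Set.mem_insert c F)
  have hstep : (mkSCG G).Step true (Sum.inl (NB.lkChk ρ h ∅ (insert c F) X) :: l)
      (Sum.inl (NB.lkChk ρ h ∅ F X) :: l) := by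
    have hFc : insert c F \ {c} = F := by
      simp [Set.insert_diff_of_mem, Set.diff_singleton_eq_self hcF]
    have := step_of G (BR.chkF ρ h ∅ (insert c F) X c hρ hX (by simp)
      (fun y hy => hsub hy) hc (habs c (Set.mem_insert c F)).1) [] l (by simp) ?_
    · rw [hFc] at this
      simpa using this
    · intro q hq
      simp only [Set.mem_singleton_iff] at hq
      subst hq
      simp only [mem_alph, List.nil_append, List.mem_cons]
      rintro (heq | hmem)
      · simp at heq
      · exact (habs c (Set.mem_insert c F)).2 hmem
  exact Relation.ReflTransGen.head hstep
    (ih (fun y hy => hsub (Set.mem_insert_of_mem _ hy))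
      (fun y hy => habs y (Set.mem_insert_of_mem _ hy)))

end PartB

namespace PartB

variable {N T : Type} (G : RCG N T)

def lockform : List (Symb N T) → List (Symb (NB N T) T)
  | [] => []
  | X :: t => Sum.inl (NB.lkIdle X) :: t.map e

lemma complete_reach {s : List (Symb N T)} (h : Reach G s) :
    Relation.ReflTransGen ((mkSCG G).Step true) [Sum.inl NB.st] (lockform s) := by
  induction h with
  | refl =>
    have hstep := step_of G (BR.start (G := G)) [] [] (by simp) (by simp)
    simpa [lockform] using Relation.ReflTransGen.single hstep
  | @tail s₁ s₂ hreach hstep ih =>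
    obtain ⟨A, x, Per, For, u, v, hr, h1, h2, hp, hf⟩ := hstep
    rw [if_neg Bool.false_ne_true] at hp hf
    have hSig : ∀ c ∈ s₁, c ∈ Sig G := reach_sub_Sig G hreach
    have hPerS : Per ⊆ SigN G := by
      intro B hB
      have h3 := hp B hB
      simp only [mem_alph, List.mem_append] at h3
      rcases h3 with h' | h'
      · exact hSig _ (by rw [h1]; exact List.mem_append.2 (Or.inl h'))
      · exact hSig _ (by rw [h1]; exact List.mem_append.2 (Or.inr (List.mem_cons_of_mem _ h')))
    have hPerFin : Per.Finite := (SigN_finite G).subset hPerS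
    have hForFin : (For ∩ SigN G).Finite := (SigN_finite G).subset Set.inter_subset_right
    set ρ : Rl N T := (A, x, Per, For) with hρdef
    refine Relation.ReflTransGen.trans ih ?_
    rcases u with _ | ⟨X, u₀⟩
    · -- rewrite at the locked (first) position
      have hXS : Sum.inl A ∈ Sig G := hSig _ (by rw [h1]; simp)
      have e1 : lockform s₁ = Sum.inl (NB.lkIdle (Sum.inl A)) :: v.map e := by
        rw [h1]; rfl
      have st1 := step_of G (BR.engage ρ (Sum.inl A) hr hPerS hXS) [] (v.map e)
        (by simp) (by simp)
      have st2 := step_of G (BR.markhat ρ hr) [] (v.map e) (by simp) (by simp)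
      have ch1 := chainP G ρ true (Sum.inl A) (For ∩ SigN G) hr hXS
        Set.inter_subset_right (v.map e) Per hPerFin (by rfl) hPerS ?_
      · have ch2 := chainF G ρ true (Sum.inl A) hr hXS (v.map e) (For ∩ SigN G)
          hForFin Set.inter_subset_right ?_
        · rcases hx : x with _ | ⟨x₁, xs⟩
          · exact absurd (hx ▸ rfl) (G.ne _ hr)
          · have st3 := step_of G (BR.finhat ρ x₁ xs hr (by simp [hρdef, hx])) []
              (v.map e) (by simp) (by simp)
            have e2 : lockform s₂ = Sum.inl (NB.lkIdle x₁) :: (xs.map e ++ v.map e) := by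
              rw [h2, hx]; simp [lockform]
            rw [e1, e2]
            refine Relation.ReflTransGen.head (by simpa using st1) ?_
            refine Relation.ReflTransGen.head (by simpa using st2) ?_
            refine Relation.ReflTransGen.trans (by simpa using ch1) ?_
            refine Relation.ReflTransGen.trans (by simpa using ch2) ?_
            exact Relation.ReflTransGen.single (by simpa using st3)
        · intro c hc
          refine ⟨Or.inl rfl, ?_⟩
          intro hmem
          rw [old_mem_map_e] at hmem
          exact hf c hc.1 (by simpa using hmem)
      · intro b hb
        right
        rw [old_mem_map_e]
        simpa using hp b hb
    · -- rewrite at a non-locked position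
      have hXS : X ∈ Sig G := hSig _ (by rw [h1]; simp)
      have e1 : lockform s₁ = Sum.inl (NB.lkIdle X) ::
          (u₀.map e ++ Sum.inl (NB.old A) :: v.map e) := by
        rw [h1]; simp [lockform]
      have st1 := step_of G (BR.engage ρ X hr hPerS hXS) []
        (u₀.map e ++ Sum.inl (NB.old A) :: v.map e) (by simp) (by simp)
      have st2 := step_of G (BR.mark ρ X hr hXS)
        (Sum.inl (NB.lkPre ρ X) :: u₀.map e) (v.map e) (by simp) (by simp)
      have st3 := step_of G (BR.adv ρ X hr hXS) []
        (u₀.map e ++ Sum.inl (NB.mk ρ) :: v.map e) (by simp) (by simp)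
      set l : List (Symb (NB N T) T) := u₀.map e ++ Sum.inl (NB.mk ρ) :: v.map e with hl
      have ch1 := chainP G ρ false X (For ∩ SigN G) hr hXS Set.inter_subset_right
        l Per hPerFin (by rfl) hPerS ?_
      · have ch2 := chainF G ρ false X hr hXS l (For ∩ SigN G) hForFin
          Set.inter_subset_right ?_
        · have st4 := step_of G (BR.fin ρ X hr hXS)
            (Sum.inl (NB.lkChk ρ false ∅ ∅ X) :: u₀.map e) (v.map e) (by simp) (by simp)
          have st5 := step_of G (BR.unlock ρ X hr hXS) []
            (u₀.map e ++ x.map e ++ v.map e) (by simp) ?_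
          · have e2 : lockform s₂ = Sum.inl (NB.lkIdle X) ::
                (u₀.map e ++ x.map e ++ v.map e) := by
              rw [h2]; simp [lockform]
            rw [e1, e2]
            refine Relation.ReflTransGen.head (by simpa using st1) ?_
            refine Relation.ReflTransGen.head (by simpa using st2) ?_
            refine Relation.ReflTransGen.head (by simpa using st3) ?_
            refine Relation.ReflTransGen.trans (by simpa [hl] using ch1) ?_
            refine Relation.ReflTransGen.trans (by simpa [hl] using ch2) ?_
            refine Relation.ReflTransGen.head (by simpa using st4) ?_
            exact Relation.ReflTransGen.single (by simpa using st5)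
          · intro q hq
            simp only [Set.mem_singleton_iff] at hq
            subst hq
            simp
        · intro c hc
          constructor
          · right
            intro hXc
            exact hf c hc.1 (by rw [← hXc] at *; rw [h1] at hSig; simp)
          · intro hmem
            rw [hl] at hmem
            rcases List.mem_append.1 hmem with h' | h'
            · exact hf c hc.1 (by simp only [mem_alph, List.mem_append]; exact Or.inl (List.mem_cons_of_mem _ (by simpa using h')))
            · rcases List.mem_cons.1 h' with h'' | h''
              · simp at h''
              · exact hf c hc.1 (by simp only [mem_alph, List.mem_append]; exact Or.inr (by simpa using h''))
      · intro b hb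
        have h3 := hp b hb
        simp only [mem_alph, List.mem_append, List.mem_cons] at h3
        rcases h3 with (h'' | h'') | h'
        · exact Or.inl ⟨rfl, h''.symm⟩
        · right; rw [hl]
          exact List.mem_append.2 (Or.inl (by simpa using h''))
        · right; rw [hl]
          exact List.mem_append.2 (Or.inr (List.mem_cons_of_mem _ (by simpa using h')))

end PartB

namespace PartB

variable {N T : Type}

lemma cons_split {α : Type} {b₀ c : α} {l u v : List α} (h : b₀ :: l = u ++ c :: v) :
    (u = [] ∧ b₀ = c ∧ v = l) ∨ ∃ u₀, u = b₀ :: u₀ ∧ l = u₀ ++ c :: v := by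
  cases u with
  | nil => simp only [List.nil_append, List.cons.injEq] at h; exact Or.inl ⟨rfl, h.1, h.2.symm⟩
  | cons d u₀ =>
    simp only [List.cons_append, List.cons.injEq] at h
    exact Or.inr ⟨u₀, by rw [h.1], h.2⟩

lemma mid_split {α : Type} {q c : α} : ∀ {l₁ l₂ u v : List α},
    l₁ ++ q :: l₂ = u ++ c :: v →
    (∃ w, u = l₁ ++ q :: w ∧ l₂ = w ++ c :: v) ∨ (u = l₁ ∧ q = c ∧ v = l₂) ∨
    (∃ w, l₁ = u ++ c :: w ∧ v = w ++ q :: l₂) := by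
  intro l₁
  induction l₁ with
  | nil =>
    intro l₂ u v h
    simp only [List.nil_append] at h
    rcases cons_split h with ⟨hu, hqc, hv⟩ | ⟨u₀, hu, hl⟩
    · exact Or.inr (Or.inl ⟨hu, hqc, hv⟩)
    · exact Or.inl ⟨u₀, by rw [hu]; rfl, hl⟩
  | cons d l₁' ih =>
    intro l₂ u v h
    rcases u with _ | ⟨b, u'⟩
    · simp only [List.nil_append, List.cons_append, List.cons.injEq] at h
      exact Or.inr (Or.inr ⟨l₁', by rw [h.1]; rfl, h.2.symm⟩)
    · simp only [List.cons_append, List.cons.injEq] at h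
      rcases ih h.2 with ⟨w, hu, hl⟩ | ⟨hu, hqc, hv⟩ | ⟨w, hl, hv⟩
      · exact Or.inl ⟨w, by rw [h.1, hu, List.cons_append], hl⟩
      · exact Or.inr (Or.inl ⟨by rw [h.1, hu], hqc, hv⟩)
      · exact Or.inr (Or.inr ⟨w, by rw [h.1, hl, List.cons_append], hv⟩)

lemma map_e_split {t : List (Symb N T)} {u₀ v₀ : List (Symb (NB N T) T)}
    {c : Symb (NB N T) T} : t.map e = u₀ ++ c :: v₀ →
    ∃ t₁ d t₂, t = t₁ ++ d :: t₂ ∧ u₀ = t₁.map e ∧ c = e d ∧ v₀ = t₂.map e := by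
  induction t generalizing u₀ with
  | nil => intro h; simp at h
  | cons d t' ih =>
    intro h
    rcases u₀ with _ | ⟨b, u₀'⟩
    · simp only [List.map_cons, List.nil_append, List.cons.injEq] at h
      exact ⟨[], d, t', by simp, by simp, h.1.symm, h.2.symm⟩
    · simp only [List.map_cons, List.cons_append, List.cons.injEq] at h
      obtain ⟨t₁, d', t₂, ht, hu, hc, hv⟩ := ih h.2
      exact ⟨d :: t₁, d', t₂, by rw [ht]; rfl, by simp [h.1.symm, hu], hc, hv⟩

lemma e_eq_inl {d : Symb N T} {A' : NB N T} (h : (Sum.inl A' : Symb (NB N T) T) = e d) :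
    ∃ A₀, d = Sum.inl A₀ ∧ A' = NB.old A₀ := by
  rcases d with A₀ | a
  · exact ⟨A₀, rfl, by simpa using h⟩
  · simp at h

end PartB

namespace PartB

variable {N T : Type} (G : RCG N T)

inductive Inv : List (Symb (NB N T) T) → Prop
  | s0 : Inv [Sum.inl NB.st]
  | s1 (X : Symb N T) (t : List (Symb N T)) (hreach : Reach G (X :: t)) :
      Inv (Sum.inl (NB.lkIdle X) :: t.map e)
  | s2 (ρ : Rl N T) (X : Symb N T) (t : List (Symb N T)) (hreach : Reach G (X :: t))
      (hρ : ρ ∈ G.rules) (hPerS : ρ.2.2.1 ⊆ SigN G) :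
      Inv (Sum.inl (NB.lkPre ρ X) :: t.map e)
  | s2m (ρ : Rl N T) (X : Symb N T) (t₁ t₂ : List (Symb N T))
      (hreach : Reach G (X :: (t₁ ++ Sum.inl ρ.1 :: t₂))) (hρ : ρ ∈ G.rules)
      (hPerS : ρ.2.2.1 ⊆ SigN G) :
      Inv (Sum.inl (NB.lkPre ρ X) :: (t₁.map e ++ Sum.inl (NB.mk ρ) :: t₂.map e))
  | s3e (ρ : Rl N T) (X : Symb N T) (t₁ t₂ : List (Symb N T)) (P F : Set N)
      (hreach : Reach G (X :: (t₁ ++ Sum.inl ρ.1 :: t₂))) (hρ : ρ ∈ G.rules)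
      (hP : P ⊆ ρ.2.2.1) (hPerS : ρ.2.2.1 ⊆ SigN G) (hF : F ⊆ ρ.2.2.2 ∩ SigN G)
      (hchkP : ∀ b ∈ ρ.2.2.1 \ P, Sum.inl b ∈ alph (X :: (t₁ ++ t₂)))
      (hchkF : ∀ c ∈ (ρ.2.2.2 ∩ SigN G) \ F, Sum.inl c ∉ alph (X :: (t₁ ++ t₂))) :
      Inv (Sum.inl (NB.lkChk ρ false P F X) ::
        (t₁.map e ++ Sum.inl (NB.mk ρ) :: t₂.map e))
  | s3h (ρ : Rl N T) (t : List (Symb N T)) (P F : Set N)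
      (hreach : Reach G (Sum.inl ρ.1 :: t)) (hρ : ρ ∈ G.rules)
      (hP : P ⊆ ρ.2.2.1) (hPerS : ρ.2.2.1 ⊆ SigN G) (hF : F ⊆ ρ.2.2.2 ∩ SigN G)
      (hchkP : ∀ b ∈ ρ.2.2.1 \ P, Sum.inl b ∈ alph t)
      (hchkF : ∀ c ∈ (ρ.2.2.2 ∩ SigN G) \ F, Sum.inl c ∉ alph t) :
      Inv (Sum.inl (NB.lkChk ρ true P F (Sum.inl ρ.1)) :: t.map e)
  | s3d (ρ : Rl N T) (X : Symb N T) (t : List (Symb N T)) (hreach : Reach G (X :: t)) :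
      Inv (Sum.inl (NB.lkChk ρ false ∅ ∅ X) :: t.map e)
  | s4 (a : T) (t : List (Symb N T)) (hreach : Reach G (Sum.inr a :: t)) :
      Inv (Sum.inr a :: t.map e)

lemma inv_step {s₁ s₂ : List (Symb (NB N T) T)} (hinv : Inv G s₁)
    (hstep : (mkSCG G).Step true s₁ s₂) : Inv G s₂ := by
  obtain ⟨A', x', P', F', u, v, hr, h1, h2, hp, hf⟩ := hstep
  rw [if_pos rfl] at hp hf
  have hbr : BR G A' x' P' F' := hr
  clear hr
  cases hinv with
  | s0 =>
    rcases cons_split h1 with ⟨hu, hA, hv⟩ | ⟨u₀, hu, hl⟩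
    · obtain rfl : A' = NB.st := (Sum.inl_injective hA).symm
      subst hu hv
      cases hbr
      rw [h2]
      simpa using Inv.s1 (G := G) (Sum.inl G.start) [] Relation.ReflTransGen.refl
    · simp at hl
  | s1 X t hreach =>
    rcases cons_split h1 with ⟨hu, hA, hv⟩ | ⟨u₀, hu, hl⟩
    · obtain rfl : A' = NB.lkIdle X := (Sum.inl_injective hA).symm
      subst hu hv
      cases hbr with
      | engage ρ' X' hρ' hPer' hX' =>
        rw [h2]
        simpa using Inv.s2 ρ' X t hreach hρ' hPer'
      | finish a ha =>
        rw [h2]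
        simpa using Inv.s4 a t hreach
    · obtain ⟨t₁, d, t₂, ht, hu₀, hc, hv'⟩ := map_e_split hl
      obtain ⟨A₀, hd, hA'⟩ := e_eq_inl hc
      subst hA'
      cases hbr with
      | mark ρ' X' hρ' hX' =>
        exfalso
        have h3 := hp (Set.mem_singleton _)
        simp only [mem_alph, List.mem_cons] at h3
        rcases h3 with h' | h'
        · simp at h'
        · exact lkPre_not_mem_map_e h'
  | s2 ρ X t hreach hρ hPerS =>
    rcases cons_split h1 with ⟨hu, hA, hv⟩ | ⟨u₀, hu, hl⟩
    · obtain rfl : A' = NB.lkPre ρ X := (Sum.inl_injective hA).symm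
      subst hu hv
      cases hbr with
      | adv ρ' X' hρ' hX' =>
        exfalso
        have h3 := hp (Set.mem_singleton _)
        simp only [mem_alph, List.mem_cons] at h3
        rcases h3 with h' | h'
        · simp at h'
        · exact mk_not_mem_map_e h'
      | markhat ρ' hρ' =>
        rw [h2]
        have hsh : ([] : List (Symb (NB N T) T)) ++
            [Sum.inl (NB.lkChk ρ true ρ.2.2.1 (ρ.2.2.2 ∩ SigN G) (Sum.inl ρ.1))] ++ t.map e
            = Sum.inl (NB.lkChk ρ true ρ.2.2.1 (ρ.2.2.2 ∩ SigN G) (Sum.inl ρ.1)) ::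
              t.map e := by simp
        rw [hsh]
        exact Inv.s3h ρ t ρ.2.2.1 (ρ.2.2.2 ∩ SigN G) hreach hρ (fun _ h => h) hPerS
          (fun _ h => h) (by simp) (by simp)
    · obtain ⟨t₁, d, t₂, ht, hu₀, hc, hv'⟩ := map_e_split hl
      obtain ⟨A₀, hd, hA'⟩ := e_eq_inl hc
      subst hA'
      cases hbr with
      | mark ρ' X' hρ' hX' =>
        have h3 := hp (Set.mem_singleton _)
        simp only [mem_alph, List.mem_cons] at h3
        rcases h3 with h' | h'
        · -- lkPre ρ' X' = lkPre ρ X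
          obtain ⟨rfl, rfl⟩ : ρ' = ρ ∧ X' = X := by
            have := Sum.inl_injective h'
            exact ⟨by injection this, by injection this⟩
          subst hu hu₀ hv' hd
          rw [h2]
          have hsh : Sum.inl (NB.lkPre ρ' X') :: List.map e t₁ ++
              [Sum.inl (NB.mk ρ')] ++ List.map e t₂ =
              Sum.inl (NB.lkPre ρ' X') ::
              (t₁.map e ++ Sum.inl (NB.mk ρ') :: t₂.map e) := by simp
          rw [hsh]
          exact Inv.s2m ρ' X' t₁ t₂ (ht ▸ hreach) hρ hPerS
        · exact absurd h' lkPre_not_mem_map_e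
  | s2m ρ X t₁ t₂ hreach hρ hPerS =>
    rcases cons_split h1 with ⟨hu, hA, hv⟩ | ⟨u₀, hu, hl⟩
    · obtain rfl : A' = NB.lkPre ρ X := (Sum.inl_injective hA).symm
      subst hu hv
      cases hbr with
      | adv ρ'' X'' hρ'' hX'' =>
        rw [h2]
        have hsh : ([] : List (Symb (NB N T) T)) ++
            [Sum.inl (NB.lkChk ρ false ρ.2.2.1 (ρ.2.2.2 ∩ SigN G) X)] ++
            (t₁.map e ++ Sum.inl (NB.mk ρ) :: t₂.map e) =
            Sum.inl (NB.lkChk ρ false ρ.2.2.1 (ρ.2.2.2 ∩ SigN G) X) ::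
            (t₁.map e ++ Sum.inl (NB.mk ρ) :: t₂.map e) := by simp
        rw [hsh]
        exact Inv.s3e ρ X t₁ t₂ ρ.2.2.1 (ρ.2.2.2 ∩ SigN G) hreach hρ (fun _ h => h)
          hPerS (fun _ h => h) (by simp) (by simp)
      | markhat ρ'' hρ'' =>
        exfalso
        apply hf _ (Set.mem_singleton _)
        simp only [mem_alph, List.mem_cons, List.mem_append]
        exact Or.inr (Or.inr (Or.inl trivial))
    · rcases mid_split hl with ⟨w, hu', hl₂⟩ | ⟨hu', hq, hv'⟩ | ⟨w, hl₁, hv'⟩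
      · obtain ⟨s₁', d, s₂', ht, hw, hc, hv''⟩ := map_e_split hl₂
        obtain ⟨A₀, hd, hA'⟩ := e_eq_inl hc
        subst hA'
        cases hbr with
        | mark ρ'' X'' hρ'' hX'' =>
          exfalso
          have h3 := hp (Set.mem_singleton _)
          simp only [mem_alph, List.mem_cons, List.mem_append] at h3
          rcases h3 with h' | h' | h' | h'
          · -- lkPre ρ'' X'' = lkPre ρ X
            have h4 : ρ'' = ρ := by
              have := Sum.inl_injective h'
              injection this
            subst h4
            apply hf _ (Set.mem_singleton _)
            simp only [mem_alph, List.mem_cons, List.mem_append]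
            exact Or.inr (Or.inr (Or.inl trivial))
          · exact lkPre_not_mem_map_e h'
          · simp at h'
          · exact lkPre_not_mem_map_e h'
      · have hA'' : A' = NB.mk ρ := (Sum.inl_injective hq).symm
        subst hA''
        cases hbr with
        | fin ρ'' X'' hρ'' hX'' =>
          exfalso
          have h3 := hp (Set.mem_singleton _)
          simp only [mem_alph, List.mem_cons, List.mem_append] at h3
          rcases h3 with h' | h' | h' | h'
          · simp at h'
          · exact lkChk_not_mem_map_e h'
          · simp at h'
          · exact lkChk_not_mem_map_e h'
      · obtain ⟨s₁', d, s₂', ht, hw, hc, hv''⟩ := map_e_split hl₁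
        obtain ⟨A₀, hd, hA'⟩ := e_eq_inl hc
        subst hA'
        cases hbr with
        | mark ρ'' X'' hρ'' hX'' =>
          exfalso
          have h3 := hp (Set.mem_singleton _)
          simp only [mem_alph, List.mem_cons, List.mem_append] at h3
          rcases h3 with h' | h' | h' | h'
          · have h4 : ρ'' = ρ := by
              have := Sum.inl_injective h'
              injection this
            subst h4
            apply hf _ (Set.mem_singleton _)
            simp only [mem_alph, List.mem_cons, List.mem_append]
            exact Or.inr (Or.inr (Or.inl trivial))
          · exact lkPre_not_mem_map_e h'
          · simp at h'
          · exact lkPre_not_mem_map_e h'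
  | s3e ρ X t₁ t₂ P F hreach hρ hP hPerS hF hchkP hchkF =>
    rcases cons_split h1 with ⟨hu, hA, hv⟩ | ⟨u₀, hu, hl⟩
    · obtain rfl : A' = NB.lkChk ρ false P F X := (Sum.inl_injective hA).symm
      subst hu hv
      cases hbr with
      | chkP ρ'' h'' P'' F'' X'' b hρ'' hX'' hP'' hF'' hb =>
        have h3 := hp (Set.mem_singleton _)
        simp only [mem_alph, List.mem_cons, List.mem_append, old_mem_map_e] at h3
        have hbmem : Sum.inl b ∈ alph (X :: (t₁ ++ t₂)) := by
          simp only [mem_alph, List.mem_cons, List.mem_append]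
          rcases h3 with h' | h' | h' | h'
          · exact absurd h' (by simp)
          · exact Or.inr (Or.inl h')
          · exact absurd h' (by simp)
          · exact Or.inr (Or.inr h')
        rw [h2]
        have hsh : ([] : List (Symb (NB N T) T)) ++
            [Sum.inl (NB.lkChk ρ false (P \ {b}) F X)] ++
            (t₁.map e ++ Sum.inl (NB.mk ρ) :: t₂.map e) =
            Sum.inl (NB.lkChk ρ false (P \ {b}) F X) ::
            (t₁.map e ++ Sum.inl (NB.mk ρ) :: t₂.map e) := by simp
        rw [hsh]
        refine Inv.s3e ρ X t₁ t₂ (P \ {b}) F hreach hρ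
          ((Set.diff_subset).trans hP) hPerS hF ?_ hchkF
        rintro b' ⟨hb'Per, hb'n⟩
        by_cases hb'P : b' ∈ P
        · have hb'b : b' = b := by
            by_contra hne
            exact hb'n ⟨hb'P, by simpa using hne⟩
          subst hb'b
          exact hbmem
        · exact hchkP b' ⟨hb'Per, hb'P⟩
      | chkPX ρ'' P'' F'' b hρ'' hb hP'' hF'' =>
        rw [h2]
        have hsh : ([] : List (Symb (NB N T) T)) ++
            [Sum.inl (NB.lkChk ρ false (P \ {b}) F (Sum.inl b))] ++
            (t₁.map e ++ Sum.inl (NB.mk ρ) :: t₂.map e) =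
            Sum.inl (NB.lkChk ρ false (P \ {b}) F (Sum.inl b)) ::
            (t₁.map e ++ Sum.inl (NB.mk ρ) :: t₂.map e) := by simp
        rw [hsh]
        refine Inv.s3e ρ (Sum.inl b) t₁ t₂ (P \ {b}) F hreach hρ
          ((Set.diff_subset).trans hP) hPerS hF ?_ hchkF
        rintro b' ⟨hb'Per, hb'n⟩
        by_cases hb'P : b' ∈ P
        · have hb'b : b' = b := by
            by_contra hne
            exact hb'n ⟨hb'P, by simpa using hne⟩
          subst hb'b
          simp
        · exact hchkP b' ⟨hb'Per, hb'P⟩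
      | chkF ρ'' h'' P'' F'' X'' c hρ'' hX'' hP'' hF'' hc hhX =>
        have hXc : X ≠ Sum.inl c := by
          rcases hhX with h' | h'
          · exact absurd h' (by simp)
          · exact h'
        have h3 := hf _ (Set.mem_singleton _)
        simp only [mem_alph, List.mem_cons, List.mem_append, old_mem_map_e] at h3
        push_neg at h3
        obtain ⟨-, hct₁, -, hct₂⟩ := h3
        rw [h2]
        have hsh : ([] : List (Symb (NB N T) T)) ++
            [Sum.inl (NB.lkChk ρ false P (F \ {c}) X)] ++
            (t₁.map e ++ Sum.inl (NB.mk ρ) :: t₂.map e) =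
            Sum.inl (NB.lkChk ρ false P (F \ {c}) X) ::
            (t₁.map e ++ Sum.inl (NB.mk ρ) :: t₂.map e) := by simp
        rw [hsh]
        refine Inv.s3e ρ X t₁ t₂ P (F \ {c}) hreach hρ hP hPerS
          ((Set.diff_subset).trans hF) hchkP ?_
        rintro c' ⟨hc'FS, hc'n⟩
        by_cases hc'F : c' ∈ F
        · have hc'c : c' = c := by
            by_contra hne
            exact hc'n ⟨hc'F, by simpa using hne⟩
          subst hc'c
          intro hmem
          simp only [mem_alph, List.mem_cons, List.mem_append] at hmem
          rcases hmem with h' | h' | h'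
          · exact hXc h'.symm
          · exact hct₁ h'
          · exact hct₂ h'
        · exact hchkF c' ⟨hc'FS, hc'F⟩
      | unlock ρ'' X'' hρ'' hX'' =>
        exfalso
        apply hf _ (Set.mem_singleton _)
        simp only [mem_alph, List.mem_cons, List.mem_append]
        exact Or.inr (Or.inr (Or.inl trivial))
    · rcases mid_split hl with ⟨w, hu', hl₂⟩ | ⟨hu', hq, hv'⟩ | ⟨w, hl₁, hv'⟩
      · obtain ⟨s₁', d, s₂', ht, hw, hc, hv''⟩ := map_e_split hl₂
        obtain ⟨A₀, hd, hA'⟩ := e_eq_inl hc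
        subst hA'
        cases hbr with
        | mark ρ'' X'' hρ'' hX'' =>
          exfalso
          have h3 := hp (Set.mem_singleton _)
          simp only [mem_alph, List.mem_cons, List.mem_append] at h3
          rcases h3 with h' | h' | h' | h'
          · simp at h'
          · exact lkPre_not_mem_map_e h'
          · simp at h'
          · exact lkPre_not_mem_map_e h'
      · have hA'' : A' = NB.mk ρ := (Sum.inl_injective hq).symm
        subst hA''
        cases hbr with
        | fin ρ'' X'' hρ'' hX'' =>
          have h3 := hp (Set.mem_singleton _)
          simp only [mem_alph, List.mem_cons, List.mem_append] at h3
          rcases h3 with h' | h' | h' | h'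
          · have h4 := Sum.inl_injective h'
            have hPe : (∅ : Set N) = P := by injection h4
            have hFe : (∅ : Set N) = F := by injection h4
            have hXe : X'' = X := by injection h4
            subst hPe; subst hFe; subst hXe
            have hstepG : G.Step false (X'' :: (t₁ ++ Sum.inl ρ.1 :: t₂))
                (X'' :: (t₁ ++ (ρ.2.1 ++ t₂))) := by
              refine ⟨ρ.1, ρ.2.1, ρ.2.2.1, ρ.2.2.2, X'' :: t₁, t₂, hρ, by simp, by simp,
                ?_, ?_⟩
              · intro B hB
                rw [if_neg Bool.false_ne_true]
                have := hchkP B ⟨hB, by simp⟩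
                simpa using this
              · intro B hB
                rw [if_neg Bool.false_ne_true]
                intro hmem
                by_cases hBS : B ∈ SigN G
                · exact hchkF B ⟨⟨hB, hBS⟩, by simp⟩ (by simpa using hmem)
                · apply hBS
                  have hsub := reach_sub_Sig G hreach
                  simp only [mem_alph, List.cons_append, List.mem_cons,
                    List.mem_append] at hmem
                  rcases hmem with h'' | h'' | h''
                  · exact hsub _ (by rw [h'']; simp)
                  · exact hsub _ (by simp [h''])
                  · exact hsub _ (by simp [h''])
            have hreach' : Reach G (X'' :: (t₁ ++ (ρ.2.1 ++ t₂))) :=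
              hreach.tail hstepG
            rw [h2, hu, hu', hv']
            have hsh : (Sum.inl (NB.lkChk ρ false ∅ ∅ X'') :: t₁.map e) ++
                ρ.2.1.map e ++ t₂.map e =
                Sum.inl (NB.lkChk ρ false ∅ ∅ X'') :: (t₁ ++ (ρ.2.1 ++ t₂)).map e := by
              simp
            rw [hsh]
            exact Inv.s3d ρ X'' _ hreach'
          · exact absurd h' lkChk_not_mem_map_e
          · exact absurd h' (by simp)
          · exact absurd h' lkChk_not_mem_map_e
      · obtain ⟨s₁', d, s₂', ht, hw, hc, hv''⟩ := map_e_split hl₁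
        obtain ⟨A₀, hd, hA'⟩ := e_eq_inl hc
        subst hA'
        cases hbr with
        | mark ρ'' X'' hρ'' hX'' =>
          exfalso
          have h3 := hp (Set.mem_singleton _)
          simp only [mem_alph, List.mem_cons, List.mem_append] at h3
          rcases h3 with h' | h' | h' | h'
          · simp at h'
          · exact lkPre_not_mem_map_e h'
          · simp at h'
          · exact lkPre_not_mem_map_e h'
  | s3h ρ t P F hreach hρ hP hPerS hF hchkP hchkF =>
    rcases cons_split h1 with ⟨hu, hA, hv⟩ | ⟨u₀, hu, hl⟩
    · obtain rfl : A' = NB.lkChk ρ true P F (Sum.inl ρ.1) := (Sum.inl_injective hA).symm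
      subst hu hv
      cases hbr with
      | chkP ρ'' h'' P'' F'' X'' b hρ'' hX'' hP'' hF'' hb =>
        have h3 := hp (Set.mem_singleton _)
        simp only [mem_alph, List.mem_cons, old_mem_map_e] at h3
        have hbmem : Sum.inl b ∈ alph t := by
          rcases h3 with h' | h'
          · exact absurd h' (by simp)
          · exact h'
        rw [h2]
        have hsh : ([] : List (Symb (NB N T) T)) ++
            [Sum.inl (NB.lkChk ρ true (P \ {b}) F (Sum.inl ρ.1))] ++ t.map e =
            Sum.inl (NB.lkChk ρ true (P \ {b}) F (Sum.inl ρ.1)) :: t.map e := by simp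
        rw [hsh]
        refine Inv.s3h ρ t (P \ {b}) F hreach hρ ((Set.diff_subset).trans hP) hPerS hF
          ?_ hchkF
        rintro b' ⟨hb'Per, hb'n⟩
        by_cases hb'P : b' ∈ P
        · have hb'b : b' = b := by
            by_contra hne
            exact hb'n ⟨hb'P, by simpa using hne⟩
          subst hb'b
          exact hbmem
        · exact hchkP b' ⟨hb'Per, hb'P⟩
      | chkF ρ'' h'' P'' F'' X'' c hρ'' hX'' hP'' hF'' hc hhX =>
        have h3 := hf _ (Set.mem_singleton _)
        simp only [mem_alph, List.mem_cons, old_mem_map_e] at h3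
        push_neg at h3
        obtain ⟨-, hct⟩ := h3
        rw [h2]
        have hsh : ([] : List (Symb (NB N T) T)) ++
            [Sum.inl (NB.lkChk ρ true P (F \ {c}) (Sum.inl ρ.1))] ++ t.map e =
            Sum.inl (NB.lkChk ρ true P (F \ {c}) (Sum.inl ρ.1)) :: t.map e := by simp
        rw [hsh]
        refine Inv.s3h ρ t P (F \ {c}) hreach hρ hP hPerS
          ((Set.diff_subset).trans hF) hchkP ?_
        rintro c' ⟨hc'FS, hc'n⟩
        by_cases hc'F : c' ∈ F
        · have hc'c : c' = c := by
            by_contra hne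
            exact hc'n ⟨hc'F, by simpa using hne⟩
          subst hc'c
          exact hct
        · exact hchkF c' ⟨hc'FS, hc'F⟩
      | finhat ρ'' x₁ xs hρ'' hx =>
        have hstepG : G.Step false (Sum.inl ρ.1 :: t) (ρ.2.1 ++ t) := by
          refine ⟨ρ.1, ρ.2.1, ρ.2.2.1, ρ.2.2.2, [], t, hρ, by simp, by simp, ?_, ?_⟩
          · intro B hB
            rw [if_neg Bool.false_ne_true]
            have := hchkP B ⟨hB, by simp⟩
            simpa using this
          · intro B hB
            rw [if_neg Bool.false_ne_true]
            intro hmem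
            by_cases hBS : B ∈ SigN G
            · exact hchkF B ⟨⟨hB, hBS⟩, by simp⟩ (by simpa using hmem)
            · apply hBS
              have hsub := reach_sub_Sig G hreach
              simp only [mem_alph, List.nil_append] at hmem
              exact hsub _ (by simp [hmem])
        have hreach' : Reach G (ρ.2.1 ++ t) := hreach.tail hstepG
        rw [hx] at hreach'
        rw [h2]
        have hsh : ([] : List (Symb (NB N T) T)) ++
            (Sum.inl (NB.lkIdle x₁) :: xs.map e) ++ t.map e =
            Sum.inl (NB.lkIdle x₁) :: (xs ++ t).map e := by simp
        rw [hsh]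
        exact Inv.s1 x₁ (xs ++ t) (by simpa using hreach')
    · obtain ⟨t₁', d, t₂', ht, hu₀, hc, hv'⟩ := map_e_split hl
      obtain ⟨A₀, hd, hA'⟩ := e_eq_inl hc
      subst hA'
      cases hbr with
      | mark ρ'' X'' hρ'' hX'' =>
        exfalso
        have h3 := hp (Set.mem_singleton _)
        simp only [mem_alph, List.mem_cons] at h3
        rcases h3 with h' | h'
        · simp at h'
        · exact lkPre_not_mem_map_e h'
  | s3d ρ X t hreach =>
    rcases cons_split h1 with ⟨hu, hA, hv⟩ | ⟨u₀, hu, hl⟩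
    · obtain rfl : A' = NB.lkChk ρ false ∅ ∅ X := (Sum.inl_injective hA).symm
      subst hu hv
      cases hbr with
      | chkP ρ'' h'' P'' F'' X'' b hρ'' hX'' hP'' hF'' hb =>
        rw [h2]
        have hsh : ([] : List (Symb (NB N T) T)) ++
            [Sum.inl (NB.lkChk ρ false (∅ \ {b}) ∅ X)] ++ t.map e =
            Sum.inl (NB.lkChk ρ false ∅ ∅ X) :: t.map e := by simp
        rw [hsh]
        exact Inv.s3d ρ X t hreach
      | chkPX ρ'' P'' F'' b hρ'' hb hP'' hF'' =>
        rw [h2]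
        have hsh : ([] : List (Symb (NB N T) T)) ++
            [Sum.inl (NB.lkChk ρ false (∅ \ {b}) ∅ (Sum.inl b))] ++ t.map e =
            Sum.inl (NB.lkChk ρ false ∅ ∅ (Sum.inl b)) :: t.map e := by simp
        rw [hsh]
        exact Inv.s3d ρ (Sum.inl b) t hreach
      | chkF ρ'' h'' P'' F'' X'' c hρ'' hX'' hP'' hF'' hc hhX =>
        rw [h2]
        have hsh : ([] : List (Symb (NB N T) T)) ++
            [Sum.inl (NB.lkChk ρ false ∅ (∅ \ {c}) X)] ++ t.map e =
            Sum.inl (NB.lkChk ρ false ∅ ∅ X) :: t.map e := by simp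
        rw [hsh]
        exact Inv.s3d ρ X t hreach
      | unlock ρ'' X'' hρ'' hX'' =>
        rw [h2]
        have hsh : ([] : List (Symb (NB N T) T)) ++
            [Sum.inl (NB.lkIdle X)] ++ t.map e =
            Sum.inl (NB.lkIdle X) :: t.map e := by simp
        rw [hsh]
        exact Inv.s1 X t hreach
    · obtain ⟨t₁', d, t₂', ht, hu₀, hc, hv'⟩ := map_e_split hl
      obtain ⟨A₀, hd, hA'⟩ := e_eq_inl hc
      subst hA'
      cases hbr with
      | mark ρ'' X'' hρ'' hX'' =>
        exfalso
        have h3 := hp (Set.mem_singleton _)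
        simp only [mem_alph, List.mem_cons] at h3
        rcases h3 with h' | h'
        · simp at h'
        · exact lkPre_not_mem_map_e h'
  | s4 a t hreach =>
    rcases cons_split h1 with ⟨hu, hA, hv⟩ | ⟨u₀, hu, hl⟩
    · simp at hA
    · obtain ⟨t₁, d, t₂, ht, hu₀, hc, hv'⟩ := map_e_split hl
      obtain ⟨A₀, hd, hA'⟩ := e_eq_inl hc
      subst hA'
      cases hbr with
      | mark ρ' X' hρ' hX' =>
        exfalso
        have h3 := hp (Set.mem_singleton _)
        simp only [mem_alph, List.mem_cons] at h3
        rcases h3 with h' | h'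
        · simp at h'
        · exact lkPre_not_mem_map_e h'

end PartB

namespace PartB

variable {N T : Type} (G : RCG N T)

lemma inv_reach {s' : List (Symb (NB N T) T)}
    (h : Relation.ReflTransGen ((mkSCG G).Step true) [Sum.inl NB.st] s') : Inv G s' := by
  induction h with
  | refl => exact Inv.s0
  | tail _ hstep ih => exact inv_step G ih hstep

lemma map_e_eq_map_inr {t : List (Symb N T)} {w : List T}
    (h : w.map Sum.inr = t.map e) : t = w.map Sum.inr := by
  induction t generalizing w with
  | nil =>
    rcases w with _ | ⟨a, w'⟩
    · rfl
    · simp at h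
  | cons d t' ih =>
    rcases w with _ | ⟨a, w'⟩
    · simp at h
    · simp only [List.map_cons, List.cons.injEq] at h
      obtain ⟨h1, h2⟩ := h
      have hd : d = Sum.inr a := by
        rcases d with A | b
        · simp at h1
        · simpa using h1.symm
      rw [List.map_cons, ← ih h2, hd]

lemma langB : (mkSCG G).Lang true = G.Lang false := by
  ext w
  constructor
  · intro hw
    have hinv : Inv G (w.map Sum.inr) := inv_reach G hw
    generalize hs : w.map Sum.inr = s' at hinv
    cases hinv with
    | s0 =>
      rcases w with _ | ⟨a, w'⟩ <;> simp at hs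
    | s1 X t hreach => rcases w with _ | ⟨a, w'⟩ <;> simp at hs
    | s2 ρ X t hreach hρ hPerS => rcases w with _ | ⟨a, w'⟩ <;> simp at hs
    | s2m ρ X t₁ t₂ hreach hρ hPerS => rcases w with _ | ⟨a, w'⟩ <;> simp at hs
    | s3e ρ X t₁ t₂ P F hreach hρ hP hPerS hF hchkP hchkF =>
      rcases w with _ | ⟨a, w'⟩ <;> simp at hs
    | s3h ρ t P F hreach hρ hP hPerS hF hchkP hchkF =>
      rcases w with _ | ⟨a, w'⟩ <;> simp at hs
    | s3d ρ X t hreach => rcases w with _ | ⟨a, w'⟩ <;> simp at hs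
    | s4 a t hreach =>
      rcases w with _ | ⟨a', w'⟩
      · simp at hs
      · simp only [List.map_cons, List.cons.injEq] at hs
        obtain ⟨h1, h2⟩ := hs
        obtain rfl : a' = a := by simpa using h1
        have ht : t = w'.map Sum.inr := map_e_eq_map_inr h2
        subst ht
        exact hreach
  · intro hw
    have h1 := complete_reach G hw
    have hne : w ≠ [] := by
      intro hw0
      exact reach_ne_nil G hw (by simp [hw0])
    rcases w with _ | ⟨a, w'⟩
    · exact absurd rfl hne
    · have ha : Sum.inr a ∈ Sig G := reach_sub_Sig G hw _ (by simp)
      have hlf : lockform ((a :: w').map Sum.inr) =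
          Sum.inl (NB.lkIdle (Sum.inr a)) :: (w'.map Sum.inr : List (Symb N T)).map e := rfl
      have hme : ((w'.map Sum.inr : List (Symb N T))).map e = w'.map Sum.inr := by
        simp [e]
      have hstep := step_of G (BR.finish a ha) [] (w'.map Sum.inr) (by simp) (by simp)
      show Relation.ReflTransGen ((mkSCG G).Step true) [Sum.inl NB.st]
        ((a :: w').map Sum.inr)
      refine Relation.ReflTransGen.tail ?_ (by simpa using hstep)
      have h2 := h1
      rw [hlf, hme] at h2
      exact h2

end PartB


/-- SC(1,1) = RC. -/
theorem sc11_eq_rc (T : Type) : SC11 T = RC T := by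
  ext L
  constructor
  · rintro ⟨N, G, rfl⟩
    exact ⟨Symb N T, PartA.mkRCG G, PartA.langA G⟩
  · rintro ⟨N, G, rfl⟩
    exact ⟨PartB.NB N T, PartB.mkSCG G, PartB.langB G⟩
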